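/- arXiv:1707.04893 — 4 statements merged into one kernel-verified Lean document; each statement's English description precedes it below -/
import Mathlib

section
/- Let $d_1,d_2\in\mathbb{N}$, let $A$ be a real $d_1\times d_1$ matrix, $B$ a real $d_1\times d_2$ matrix, $T>0$, and let $\alpha_1,\alpha_2:[0,T]\to\mathbb{R}$ be continuous with $\alpha_1(0)=1$, $\alpha_1(T)=0$, $\alpha_2(0)=\alpha_2(T)=0$. Assume the matrix $U_T:=\int_0^T \alpha_2(s)\,e^{(T-s)A}BB^{*}e^{(T-s)A^{*}}\,ds$ is invertible. For $v_1\in\mathbb{R}^{d_1}$, $v_2\in\mathbb{R}^{d_2}$ define $\tilde g(t):=\alpha_1(t)v_2-\alpha_2(t)B^{*}e^{(T-t)A^{*}}U_T^{-1}\big(e^{TA}v_1+\int_0^T\alpha_1(s)e^{(T-s)A}Bv_2\,ds\big)$ and $g(t):=e^{tA}v_1+\int_0^t e^{(t-s)A}B\tilde g(s)\,ds$. Then $g(T)=0$, $\tilde g(0)=v_2$ and $\tilde g(T)=0$. -/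
open MeasureTheory Matrix


/-- The key algebraic identity in the proof of Theorem 3.2: the control `gtil`
steers the linear system to zero at time `T`. -/
theorem stmt_0 (d₁ d₂ : ℕ)
    (A : Matrix (Fin d₁) (Fin d₁) ℝ) (B : Matrix (Fin d₁) (Fin d₂) ℝ)
    (T : ℝ) (hT : 0 < T)
    (α₁ α₂ : ℝ → ℝ)
    (hα₁c : ContinuousOn α₁ (Set.Icc 0 T)) (hα₂c : ContinuousOn α₂ (Set.Icc 0 T))
    (hα₁0 : α₁ 0 = 1) (hα₁T : α₁ T = 0) (hα₂0 : α₂ 0 = 0) (hα₂T : α₂ T = 0)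
    (U : Matrix (Fin d₁) (Fin d₁) ℝ)
    (hU : U = Matrix.of fun i j => ∫ s in (0:ℝ)..T,
      α₂ s * ((NormedSpace.exp ((T - s) • A) * B * Bᵀ *
        NormedSpace.exp ((T - s) • Aᵀ)) i j))
    (hUinv : IsUnit U)
    (v₁ : Fin d₁ → ℝ) (v₂ : Fin d₂ → ℝ)
    (gtil : ℝ → Fin d₂ → ℝ)
    (hgtil : ∀ t, gtil t = α₁ t • v₂ -
      α₂ t • (Bᵀ.mulVec ((NormedSpace.exp ((T - t) • Aᵀ)).mulVec
        (U⁻¹.mulVec ((NormedSpace.exp (T • A)).mulVec v₁ +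
          ∫ s in (0:ℝ)..T, α₁ s • (NormedSpace.exp ((T - s) • A)).mulVec (B.mulVec v₂))))))
    (g : ℝ → Fin d₁ → ℝ)
    (hg : ∀ t, g t = (NormedSpace.exp (t • A)).mulVec v₁ +
      ∫ s in (0:ℝ)..t, (NormedSpace.exp ((t - s) • A)).mulVec (B.mulVec (gtil s))) :
    g T = 0 ∧ gtil 0 = v₂ ∧ gtil T = 0 := by
  letI := Matrix.linftyOpNormedAddCommGroup (m := Fin d₁) (n := Fin d₁) (α := ℝ)
  letI := Matrix.linftyOpNormedSpace (m := Fin d₁) (n := Fin d₁) (R := ℝ) (α := ℝ)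
  letI := Matrix.linftyOpNormedRing (n := Fin d₁) (α := ℝ)
  letI := Matrix.linftyOpNormedAlgebra (n := Fin d₁) (R := ℝ) (α := ℝ)
  letI := Matrix.linftyOpNormedAlgebra (n := Fin d₁) (R := ℚ) (α := ℝ)
  have hgtil0 : gtil 0 = v₂ := by rw [hgtil 0, hα₁0, hα₂0]; simp
  have hgtilT : gtil T = 0 := by rw [hgtil T, hα₁T, hα₂T]; simp
  refine ⟨?_, hgtil0, hgtilT⟩
  set w : Fin d₁ → ℝ := (NormedSpace.exp (T • A)).mulVec v₁ +
    ∫ s in (0:ℝ)..T, α₁ s • (NormedSpace.exp ((T - s) • A)).mulVec (B.mulVec v₂) with hw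
  set c : Fin d₁ → ℝ := U⁻¹.mulVec w with hc
  set M : ℝ → Matrix (Fin d₁) (Fin d₁) ℝ := fun s =>
    NormedSpace.exp ((T - s) • A) * B * Bᵀ * NormedSpace.exp ((T - s) • Aᵀ) with hM
  have hexp1 : Continuous fun s : ℝ => NormedSpace.exp ((T - s) • A) := by
    exact NormedSpace.exp_continuous.comp ((continuous_const.sub continuous_id).smul continuous_const)
  have hexp2 : Continuous fun s : ℝ => NormedSpace.exp ((T - s) • Aᵀ) := by
    exact NormedSpace.exp_continuous.comp ((continuous_const.sub continuous_id).smul continuous_const)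
  have hMc : Continuous M :=
    ((hexp1.matrix_mul continuous_const).matrix_mul continuous_const).matrix_mul hexp2
  have hIcc : Set.uIcc (0:ℝ) T = Set.Icc 0 T := Set.uIcc_of_le hT.le
  -- the continuous linear map `M ↦ M.mulVec c`
  let L : Matrix (Fin d₁) (Fin d₁) ℝ →L[ℝ] (Fin d₁ → ℝ) :=
    LinearMap.toContinuousLinearMap
      { toFun := fun N => N.mulVec c
        map_add' := fun N₁ N₂ => Matrix.add_mulVec N₁ N₂ c
        map_smul' := fun r N => Matrix.smul_mulVec r N c }
  have hNint := by
    letI : TopologicalSpace (Matrix (Fin d₁) (Fin d₁) ℝ) :=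
      (Matrix.linftyOpNormedAddCommGroup (m := Fin d₁) (n := Fin d₁) (α := ℝ)).toUniformSpace.toTopologicalSpace
    exact (show IntervalIntegrable (fun s => α₂ s • M s) volume 0 T by
      apply ContinuousOn.intervalIntegrable
      rw [hIcc]
      exact hα₂c.smul hMc.continuousOn)
  have hint1 : IntervalIntegrable
      (fun s => α₁ s • (NormedSpace.exp ((T - s) • A)).mulVec (B.mulVec v₂)) volume 0 T := by
    apply ContinuousOn.intervalIntegrable
    rw [hIcc]
    exact hα₁c.smul ((hexp1.matrix_mulVec continuous_const).continuousOn)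
  have hint2 : IntervalIntegrable (fun s => α₂ s • (M s).mulVec c) volume 0 T := by
    apply ContinuousOn.intervalIntegrable
    rw [hIcc]
    exact hα₂c.smul ((hMc.matrix_mulVec continuous_const).continuousOn)
  -- the second integral equals `w`
  have hUeq : (∫ s in (0:ℝ)..T, α₂ s • M s) = U := by
    ext i j
    let P : Matrix (Fin d₁) (Fin d₁) ℝ →L[ℝ] ℝ :=
      LinearMap.toContinuousLinearMap
        { toFun := fun N => N i j
          map_add' := fun N₁ N₂ => rfl
          map_smul' := fun r N => rfl }
    have h1 : P (∫ s in (0:ℝ)..T, α₂ s • M s) = ∫ s in (0:ℝ)..T, P (α₂ s • M s) :=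
      (P.intervalIntegral_comp_comm hNint).symm
    have h2 : ∀ s, P (α₂ s • M s) = α₂ s * (M s i j) := fun s => rfl
    have h3 : P (∫ s in (0:ℝ)..T, α₂ s • M s) = (∫ s in (0:ℝ)..T, α₂ s • M s) i j := rfl
    rw [← h3, h1]
    simp_rw [h2]
    rw [hU]
    rfl
  have hint2val : (∫ s in (0:ℝ)..T, α₂ s • (M s).mulVec c) = w := by
    have h1 : ∀ s, α₂ s • (M s).mulVec c = L (α₂ s • M s) := by
      intro s
      show _ = (α₂ s • M s).mulVec c
      rw [Matrix.smul_mulVec]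
    calc (∫ s in (0:ℝ)..T, α₂ s • (M s).mulVec c)
        = ∫ s in (0:ℝ)..T, L (α₂ s • M s) := by simp_rw [h1]
      _ = L (∫ s in (0:ℝ)..T, α₂ s • M s) := L.intervalIntegral_comp_comm hNint
      _ = U.mulVec c := by rw [hUeq]; rfl
      _ = w := by
          rw [hc, Matrix.mulVec_mulVec,
            Matrix.mul_nonsing_inv U ((Matrix.isUnit_iff_isUnit_det U).mp hUinv),
            Matrix.one_mulVec]
  have hfeq : ∀ s, (NormedSpace.exp ((T - s) • A)).mulVec (B.mulVec (gtil s))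
      = α₁ s • (NormedSpace.exp ((T - s) • A)).mulVec (B.mulVec v₂)
        - α₂ s • (M s).mulVec c := by
    intro s
    rw [hgtil s]
    simp only [Matrix.mulVec_sub, Matrix.mulVec_smul, hM, ← hw, ← hc,
      Matrix.mulVec_mulVec, Matrix.mul_assoc]
  have hsplit : (∫ s in (0:ℝ)..T,
        (NormedSpace.exp ((T - s) • A)).mulVec (B.mulVec (gtil s)))
      = (∫ s in (0:ℝ)..T, α₁ s • (NormedSpace.exp ((T - s) • A)).mulVec (B.mulVec v₂))
        - ∫ s in (0:ℝ)..T, α₂ s • (M s).mulVec c := by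
    simp_rw [hfeq]
    exact intervalIntegral.integral_sub hint1 hint2
  rw [hg T, hsplit, hint2val, hw]
  abel
end

section
/- Let $T>0$, $L\geq0$, $\lambda\in(0,1]$, $M\geq0$ and $z\in\mathbb{R}^m$. Let $F:[0,T]\times\mathbb{R}^m\to\mathbb{R}^m$ be measurable with $|F(t,z_1)-F(t,z_2)|\leq L|z_1-z_2|$ and $|F(t,0)|\leq L$ for all $t\in[0,T]$, $z_1,z_2\in\mathbb{R}^m$, and let $G:[0,T]\to\mathbb{R}^m$ satisfy $G(0)=0$ and $|G(t)-G(s)|\leq M|t-s|^{\lambda}$ for all $s,t\in[0,T]$. If $Z:[0,T]\to\mathbb{R}^m$ is continuous and satisfies $Z_t=z+\int_0^t F(s,Z_s)\,ds+G(t)$ for all $t\in[0,T]$, then there exists a constant $C>0$, depending only on $T$, $L$ and $\lambda$, such that $|Z_t-Z_s|\leq C\,(1+|z|)\big(|t-s|+M|t-s|^{\lambda}\big)$ for all $s,t\in[0,T]$. -/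
open MeasureTheory

set_option maxHeartbeats 1000000 in
/-- Pathwise Hölder estimate of Lemma 3.4: a continuous solution of
`Z_t = z + ∫₀ᵗ F(s, Z_s) ds + G(t)` with `F` Lipschitz and `G` `λ`-Hölder (constant `M`,
`G(0)=0`) satisfies `|Z_t - Z_s| ≤ C (1+|z|)(|t-s| + M |t-s|^λ)` with `C` depending only
on `T`, `L` and `λ`. -/
theorem stmt_8 (m : ℕ) (T L lam : ℝ)
    (hT : 0 < T) (hL : 0 ≤ L) (hlam₀ : 0 < lam) (hlam₁ : lam ≤ 1) :
    ∃ C > (0:ℝ), ∀ (M : ℝ), 0 ≤ M → ∀ (z : EuclideanSpace ℝ (Fin m))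
      (F : ℝ → EuclideanSpace ℝ (Fin m) → EuclideanSpace ℝ (Fin m))
      (G Z : ℝ → EuclideanSpace ℝ (Fin m)),
      Measurable (Function.uncurry F) →
      (∀ t ∈ Set.Icc (0:ℝ) T, ∀ z₁ z₂ : EuclideanSpace ℝ (Fin m),
        ‖F t z₁ - F t z₂‖ ≤ L * ‖z₁ - z₂‖) →
      (∀ t ∈ Set.Icc (0:ℝ) T, ‖F t 0‖ ≤ L) →
      G 0 = 0 →
      (∀ s ∈ Set.Icc (0:ℝ) T, ∀ t ∈ Set.Icc (0:ℝ) T, ‖G t - G s‖ ≤ M * |t - s| ^ lam) →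
      ContinuousOn Z (Set.Icc 0 T) →
      (∀ t ∈ Set.Icc (0:ℝ) T, Z t = z + (∫ s in (0:ℝ)..t, F s (Z s)) + G t) →
      ∀ s ∈ Set.Icc (0:ℝ) T, ∀ t ∈ Set.Icc (0:ℝ) T,
        ‖Z t - Z s‖ ≤ C * (1 + ‖z‖) * (|t - s| + M * |t - s| ^ lam) := by
  have hE1 : (1:ℝ) ≤ Real.exp (L * T) := Real.one_le_exp (by positivity)
  have hEpos : (0:ℝ) < Real.exp (L * T) := lt_of_lt_of_le one_pos hE1
  refine ⟨1 + L + L * (1 + L * T) * Real.exp (L * T) + L * T * Real.exp (L * T),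
    by positivity, ?_⟩
  intro M hM z F G Z hFm hFlip hF0 hG0 hG hZc hZeq
  have h0T : (0:ℝ) ∈ Set.Icc (0:ℝ) T := ⟨le_refl 0, hT.le⟩
  -- clamped version of Z
  set c : ℝ → ℝ := fun u => min (max u 0) T with hcdef
  have hcmem : ∀ u, c u ∈ Set.Icc (0:ℝ) T := fun u =>
    ⟨le_min (le_max_right u 0) hT.le, min_le_right _ _⟩
  have hceq : ∀ u ∈ Set.Icc (0:ℝ) T, c u = u := fun u hu => by
    simp only [hcdef, max_eq_left hu.1, min_eq_left hu.2]
  have hccont : Continuous c := (continuous_id.max continuous_const).min continuous_const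
  set Z' : ℝ → EuclideanSpace ℝ (Fin m) := fun u => Z (c u) with hZ'def
  have hZ'c : Continuous Z' := hZc.comp_continuous hccont hcmem
  have hZ'eq : ∀ u ∈ Set.Icc (0:ℝ) T, Z' u = Z u := fun u hu => by
    simp only [hZ'def, hceq u hu]
  -- measurability and integrability of u ↦ F u (Z u)
  have hZm : AEMeasurable Z (volume.restrict (Set.Icc (0:ℝ) T)) :=
    hZc.aemeasurable measurableSet_Icc
  have hgm : AEStronglyMeasurable (fun u => F u (Z u))
      (volume.restrict (Set.Icc (0:ℝ) T)) := by
    have h1 : AEMeasurable (fun u => (u, Z u)) (volume.restrict (Set.Icc (0:ℝ) T)) :=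
      aemeasurable_id.prodMk hZm
    exact (hFm.comp_aemeasurable h1).aestronglyMeasurable
  have hgbd : ∀ u ∈ Set.Icc (0:ℝ) T, ‖F u (Z u)‖ ≤ L + L * ‖Z u‖ := by
    intro u hu
    calc ‖F u (Z u)‖ = ‖(F u (Z u) - F u 0) + F u 0‖ := by rw [sub_add_cancel]
    _ ≤ ‖F u (Z u) - F u 0‖ + ‖F u 0‖ := norm_add_le _ _
    _ ≤ L * ‖Z u - 0‖ + L := add_le_add (hFlip u hu _ _) (hF0 u hu)
    _ = L + L * ‖Z u‖ := by rw [sub_zero]; ring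
  obtain ⟨K0, hK0⟩ := isCompact_Icc.exists_bound_of_continuousOn hZc
  have hgint : IntegrableOn (fun u => F u (Z u)) (Set.Icc (0:ℝ) T) := by
    refine Integrable.mono' (integrable_const (L + L * K0)) hgm ?_
    filter_upwards [ae_restrict_mem measurableSet_Icc] with u hu
    have h1 := hgbd u hu
    have h2 := hK0 u hu
    nlinarith [norm_nonneg (Z u)]
  have hgii : ∀ a b : ℝ, a ∈ Set.Icc (0:ℝ) T → b ∈ Set.Icc (0:ℝ) T →
      IntervalIntegrable (fun u => F u (Z u)) volume a b := fun a b ha hb =>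
    (hgint.mono_set (Set.uIcc_subset_Icc ha hb)).intervalIntegrable
  -- the auxiliary integral function
  set h : ℝ → ℝ := fun u => ∫ x in (0:ℝ)..u, ‖Z' x‖ with hhdef
  have hZ'nc : Continuous fun x => ‖Z' x‖ := hZ'c.norm
  have hhd : ∀ u : ℝ, HasDerivAt h ‖Z' u‖ u := fun u =>
    (hZ'nc.integral_hasStrictDerivAt 0 u).hasDerivAt
  have hhc : Continuous h := by
    rw [continuous_iff_continuousAt]; exact fun u => (hhd u).continuousAt
  have hhnn : ∀ u : ℝ, 0 ≤ u → 0 ≤ h u := fun u hu =>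
    intervalIntegral.integral_nonneg hu (fun x _ => norm_nonneg _)
  have hTlam : (0:ℝ) ≤ T ^ lam := Real.rpow_nonneg hT.le _
  have hAnn : 0 ≤ ‖z‖ + L * T + M * T ^ lam := by positivity
  -- pointwise a priori bound
  have hZbd : ∀ u ∈ Set.Icc (0:ℝ) T,
      ‖Z u‖ ≤ (‖z‖ + L * T + M * T ^ lam) + L * h u := by
    intro u hu
    have hu0 : (0:ℝ) ≤ u := hu.1
    have h1 : ‖∫ x in (0:ℝ)..u, F x (Z x)‖ ≤ ∫ x in (0:ℝ)..u, (L + L * ‖Z' x‖) := by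
      refine (intervalIntegral.norm_integral_le_integral_norm hu0).trans ?_
      refine intervalIntegral.integral_mono_on hu0 (hgii 0 u h0T hu).norm
        ((continuous_const.add (continuous_const.mul hZ'nc)).intervalIntegrable _ _) ?_
      intro x hx
      have hx' : x ∈ Set.Icc (0:ℝ) T := ⟨hx.1, hx.2.trans hu.2⟩
      rw [hZ'eq x hx']
      exact hgbd x hx'
    have h2 : (∫ x in (0:ℝ)..u, (L + L * ‖Z' x‖)) = L * u + L * h u := by
      rw [intervalIntegral.integral_add (f := fun _ => L) (g := fun x => L * ‖Z' x‖) intervalIntegrable_const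
        ((continuous_const.mul hZ'nc).intervalIntegrable _ _),
        intervalIntegral.integral_const, intervalIntegral.integral_const_mul]
      simp only [hhdef, smul_eq_mul, sub_zero]
      ring
    have hGu : ‖G u‖ ≤ M * T ^ lam := by
      have h3 := hG 0 h0T u hu
      rw [hG0, sub_zero] at h3
      refine h3.trans ?_
      have h4 : |u - 0| ^ lam ≤ T ^ lam := by
        rw [sub_zero, abs_of_nonneg hu0]
        exact Real.rpow_le_rpow hu0 hu.2 hlam₀.le
      nlinarith [Real.rpow_nonneg (abs_nonneg (u - 0)) lam]
    have h5 : ‖Z u‖ ≤ ‖z‖ + ‖∫ x in (0:ℝ)..u, F x (Z x)‖ + ‖G u‖ := by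
      rw [hZeq u hu]
      exact (norm_add_le _ _).trans (add_le_add (norm_add_le _ _) le_rfl)
    have h6 : L * u ≤ L * T := mul_le_mul_of_nonneg_left hu.2 hL
    rw [h2] at h1
    linarith
  -- Gronwall
  have hgron : ∀ u ∈ Set.Icc (0:ℝ) T,
      ‖h u‖ ≤ gronwallBound 0 L (‖z‖ + L * T + M * T ^ lam) (u - 0) := by
    refine norm_le_gronwallBound_of_norm_deriv_right_le hhc.continuousOn
      (fun x _ => (hhd x).hasDerivWithinAt) ?_ ?_
    · simp [hhdef]
    · intro x hx
      have hx' : x ∈ Set.Icc (0:ℝ) T := ⟨hx.1, hx.2.le⟩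
      have h1 : ‖Z' x‖ ≤ (‖z‖ + L * T + M * T ^ lam) + L * h x := by
        rw [hZ'eq x hx']; exact hZbd x hx'
      rw [Real.norm_of_nonneg (norm_nonneg (Z' x)),
        Real.norm_of_nonneg (hhnn x hx.1)]
      linarith
  -- uniform bound on Z
  have hZK : ∀ u ∈ Set.Icc (0:ℝ) T,
      ‖Z u‖ ≤ (‖z‖ + L * T + M * T ^ lam) * Real.exp (L * T) := by
    intro u hu
    have h1 := hZbd u hu
    have h2 := hgron u hu
    rw [Real.norm_of_nonneg (hhnn u hu.1), sub_zero] at h2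
    have h3 : (‖z‖ + L * T + M * T ^ lam)
        + L * gronwallBound 0 L (‖z‖ + L * T + M * T ^ lam) u
        ≤ (‖z‖ + L * T + M * T ^ lam) * Real.exp (L * u) := by
      rcases eq_or_ne L 0 with hL0 | hL0
      · simp [gronwallBound_K0, hL0]
      · rw [gronwallBound_of_K_ne_0 hL0]
        have : (‖z‖ + L * T + M * T ^ lam)
            + L * (0 * Real.exp (L * u) + (‖z‖ + L * T + M * T ^ lam) / L
              * (Real.exp (L * u) - 1))
            = (‖z‖ + L * T + M * T ^ lam) * Real.exp (L * u) := by
          field_simp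
          ring
        linarith [this.le]
    have h4 : Real.exp (L * u) ≤ Real.exp (L * T) :=
      Real.exp_le_exp.2 (mul_le_mul_of_nonneg_left hu.2 hL)
    have h5 : L * h u ≤ L * gronwallBound 0 L (‖z‖ + L * T + M * T ^ lam) u :=
      mul_le_mul_of_nonneg_left h2 hL
    nlinarith
  -- main claim for s ≤ t
  have main : ∀ s ∈ Set.Icc (0:ℝ) T, ∀ t ∈ Set.Icc (0:ℝ) T, s ≤ t →
      ‖Z t - Z s‖ ≤ (1 + L + L * (1 + L * T) * Real.exp (L * T)
        + L * T * Real.exp (L * T)) * (1 + ‖z‖)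
        * (|t - s| + M * |t - s| ^ lam) := by
    intro s hs t ht hst
    have hd : |t - s| = t - s := abs_of_nonneg (sub_nonneg.2 hst)
    have hd0 : (0:ℝ) ≤ t - s := sub_nonneg.2 hst
    have hdT : t - s ≤ T := by
      have := hs.1; have := ht.2; linarith
    have hsplit : Z t - Z s = (∫ x in s..t, F x (Z x)) + (G t - G s) := by
      rw [hZeq t ht, hZeq s hs]
      have hadd := intervalIntegral.integral_add_adjacent_intervals
        (hgii 0 s h0T hs) (hgii s t hs ht)
      rw [← hadd]; abel
    have hnI : ‖∫ x in s..t, F x (Z x)‖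
        ≤ (L + L * ((‖z‖ + L * T + M * T ^ lam) * Real.exp (L * T))) * (t - s) := by
      calc ‖∫ x in s..t, F x (Z x)‖ ≤ ∫ x in s..t, ‖F x (Z x)‖ :=
        intervalIntegral.norm_integral_le_integral_norm hst
      _ ≤ ∫ x in s..t, (L + L * ((‖z‖ + L * T + M * T ^ lam) * Real.exp (L * T))) := by
          refine intervalIntegral.integral_mono_on hst (hgii s t hs ht).norm
            intervalIntegrable_const ?_
          intro x hx
          have hx' : x ∈ Set.Icc (0:ℝ) T := ⟨hs.1.trans hx.1, hx.2.trans ht.2⟩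
          have h1 := hgbd x hx'
          have h2 := hZK x hx'
          nlinarith
      _ = (L + L * ((‖z‖ + L * T + M * T ^ lam) * Real.exp (L * T))) * (t - s) := by
          rw [intervalIntegral.integral_const, smul_eq_mul, mul_comm]
    have hnorm : ‖Z t - Z s‖
        ≤ (L + L * ((‖z‖ + L * T + M * T ^ lam) * Real.exp (L * T))) * (t - s)
          + M * |t - s| ^ lam := by
      rw [hsplit]
      exact (norm_add_le _ _).trans (add_le_add hnI (hG s hs t ht))
    rw [hd] at hnorm ⊢
    have hdl : (0:ℝ) ≤ (t - s) ^ lam := Real.rpow_nonneg hd0 _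
    have hkey : T ^ lam * (t - s) ≤ T * (t - s) ^ lam := by
      rcases eq_or_lt_of_le hd0 with hdd | hdd
      · rw [← hdd, mul_zero, Real.zero_rpow hlam₀.ne', mul_zero]
      · have hsum : lam + (1 - lam) = 1 := by ring
        have h1 : t - s = (t - s) ^ lam * (t - s) ^ (1 - lam) := by
          rw [← Real.rpow_add hdd, hsum, Real.rpow_one]
        have h2 : (t - s) ^ (1 - lam) ≤ T ^ (1 - lam) :=
          Real.rpow_le_rpow hdd.le hdT (by linarith)
        have h3 : T ^ lam * T ^ (1 - lam) = T := by
          rw [← Real.rpow_add hT, hsum, Real.rpow_one]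
        set a := (t - s) ^ lam with hadef
        set b := (t - s) ^ (1 - lam) with hbdef
        rw [h1]
        calc T ^ lam * (a * b) = T ^ lam * b * a := by ring
        _ ≤ T ^ lam * T ^ (1 - lam) * a :=
            mul_le_mul_of_nonneg_right (mul_le_mul_of_nonneg_left h2 hTlam) hdl
        _ = T * a := by rw [h3]
    have c1 : L + L * (‖z‖ + L * T) * Real.exp (L * T)
        ≤ (1 + L + L * (1 + L * T) * Real.exp (L * T) + L * T * Real.exp (L * T))
          * (1 + ‖z‖) := by
      have hz := norm_nonneg z
      nlinarith [mul_nonneg (mul_nonneg hL hT.le) hEpos.le,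
        mul_nonneg (mul_nonneg (mul_nonneg hL hL) hT.le) hEpos.le,
        mul_nonneg hL hEpos.le,
        mul_nonneg (mul_nonneg (mul_nonneg (mul_nonneg hL hL) hT.le) hEpos.le) hz,
        mul_nonneg (mul_nonneg (mul_nonneg hL hT.le) hEpos.le) hz,
        mul_nonneg hL hz]
    have c2 : 1 + L * T * Real.exp (L * T)
        ≤ (1 + L + L * (1 + L * T) * Real.exp (L * T) + L * T * Real.exp (L * T))
          * (1 + ‖z‖) := by
      have hz := norm_nonneg z
      have hC0 : 0 ≤ 1 + L + L * (1 + L * T) * Real.exp (L * T)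
          + L * T * Real.exp (L * T) := by positivity
      nlinarith [mul_nonneg hC0 hz, mul_nonneg (mul_nonneg hL hEpos.le) hz,
        mul_nonneg (mul_nonneg (mul_nonneg hL hL) hT.le) hEpos.le,
        mul_nonneg hL hEpos.le]
    have e1 : (L + L * (‖z‖ + L * T) * Real.exp (L * T)) * (t - s)
        ≤ ((1 + L + L * (1 + L * T) * Real.exp (L * T) + L * T * Real.exp (L * T))
          * (1 + ‖z‖)) * (t - s) :=
      mul_le_mul_of_nonneg_right c1 hd0
    have e2 : (L * Real.exp (L * T) * M) * (T ^ lam * (t - s)) ≤ (L * Real.exp (L * T) * M) * (T * (t - s) ^ lam) :=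
      mul_le_mul_of_nonneg_left hkey (by positivity)
    have e3 : (1 + L * T * Real.exp (L * T)) * (M * (t - s) ^ lam)
        ≤ ((1 + L + L * (1 + L * T) * Real.exp (L * T) + L * T * Real.exp (L * T))
          * (1 + ‖z‖)) * (M * (t - s) ^ lam) :=
      mul_le_mul_of_nonneg_right c2 (by positivity)
    linarith [hnorm, e1, e2, e3]
  intro s hs t ht
  rcases le_total s t with hst | hst
  · exact main s hs t ht hst
  · have := main t ht s hs hst
    rwa [norm_sub_rev, abs_sub_comm] at this
end

section
/- Let $n\geq1$ be an integer and $T>0$. Then there exists a real polynomial $\alpha_1$ of degree at most $n+1$ such that $\alpha_1(0)=1$, $\alpha_1(T)=0$, and $\int_0^T\alpha_1(t)(T-t)^k\,dt=0$ for every $k=0,1,\dots,n-1$. Consequently, for every real $d_1\times d_1$ matrix $A$ with $A^{n}=0$ and every real $d_1\times d_2$ matrix $B$, one has $\int_0^T\alpha_1(t)\,e^{(T-t)A}B\,dt=0$. -/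
open MeasureTheory Matrix Polynomial Finset

/-- Key integration-by-parts lemma: the `m`-th derivative of a polynomial with zeros of
order `m` at `0` and `T` has vanishing moments against `(T-t)^k` for `k < m`. -/
lemma moment_zero (T : ℝ) (m k : ℕ) (hk : k < m) (u : Polynomial ℝ)
    (h0 : X ^ m ∣ u) (hTd : (X - C T) ^ m ∣ u) :
    ∫ t in (0:ℝ)..T, (Polynomial.derivative^[m] u).eval t * (T - t) ^ k = 0 := by
  set v : Polynomial ℝ := (C T - X) ^ k with hv
  have hvdeg : v.natDegree ≤ k := by
    calc v.natDegree ≤ k * (C T - X).natDegree := natDegree_pow_le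
    _ ≤ k * 1 := by
        gcongr
        exact (natDegree_sub_le _ _).trans (by simp)
    _ = k := mul_one k
  have hvz : Polynomial.derivative^[k+1] v = 0 :=
    iterate_derivative_eq_zero (lt_of_le_of_lt hvdeg (Nat.lt_succ_self k))
  set f : ℕ → Polynomial ℝ := fun j =>
    ((-1:ℝ)^j) • (Polynomial.derivative^[m-j] u * Polynomial.derivative^[j] v) with hf
  set R : Polynomial ℝ := ∑ j ∈ range (k+1),
    ((-1:ℝ)^j) • (Polynomial.derivative^[m-1-j] u * Polynomial.derivative^[j] v) with hR
  have hder : Polynomial.derivative R = Polynomial.derivative^[m] u * v := by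
    rw [hR, map_sum]
    have : ∀ j ∈ range (k+1),
        Polynomial.derivative (((-1:ℝ)^j) •
          (Polynomial.derivative^[m-1-j] u * Polynomial.derivative^[j] v)) = f j - f (j+1) := by
      intro j hj
      have hjm : j < m := lt_of_le_of_lt (Nat.lt_succ_iff.mp (mem_range.mp hj)) hk
      rw [derivative_smul, derivative_mul]
      have e1 : Polynomial.derivative (Polynomial.derivative^[m-1-j] u)
          = Polynomial.derivative^[m-j] u := by
        rw [show m - j = (m-1-j)+1 by omega, Function.iterate_succ_apply']
      have e2 : Polynomial.derivative (Polynomial.derivative^[j] v)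
          = Polynomial.derivative^[j+1] v :=
        (Function.iterate_succ_apply' _ j v).symm
      have e3 : m - (j+1) = m - 1 - j := by omega
      rw [e1, e2, hf]
      simp only [e3, pow_succ, mul_neg_one, neg_smul, sub_neg_eq_add, smul_add]
    rw [Finset.sum_congr rfl this, Finset.sum_range_sub' f (k+1)]
    simp [hf, hvz, Nat.sub_zero]
  have hXdvd : ∀ j, j < m → (Polynomial.derivative^[m-1-j] u).eval 0 = 0 := by
    intro j hj
    have : X ^ (m - (m-1-j)) ∣ Polynomial.derivative^[m-1-j] u :=
      pow_sub_dvd_iterate_derivative_of_pow_dvd _ h0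
    have hx : X ∣ Polynomial.derivative^[m-1-j] u := by
      refine dvd_trans ?_ this
      exact dvd_pow_self X (by omega)
    rw [← coeff_zero_eq_eval_zero]
    exact (X_dvd_iff).mp hx
  have hTdvd : ∀ j, j < m → (Polynomial.derivative^[m-1-j] u).eval T = 0 := by
    intro j hj
    have : (X - C T) ^ (m - (m-1-j)) ∣ Polynomial.derivative^[m-1-j] u :=
      pow_sub_dvd_iterate_derivative_of_pow_dvd _ hTd
    have hx : (X - C T) ∣ Polynomial.derivative^[m-1-j] u := by
      refine dvd_trans ?_ this
      exact dvd_pow_self _ (by omega)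
    exact dvd_iff_isRoot.mp hx
  have hR0 : R.eval 0 = 0 := by
    rw [hR, eval_finset_sum]
    refine Finset.sum_eq_zero fun j hj => ?_
    have hjm : j < m := lt_of_le_of_lt (Nat.lt_succ_iff.mp (mem_range.mp hj)) hk
    simp [hXdvd j hjm]
  have hRT : R.eval T = 0 := by
    rw [hR, eval_finset_sum]
    refine Finset.sum_eq_zero fun j hj => ?_
    have hjm : j < m := lt_of_le_of_lt (Nat.lt_succ_iff.mp (mem_range.mp hj)) hk
    simp [hTdvd j hjm]
  have hint : ∫ t in (0:ℝ)..T, (Polynomial.derivative^[m] u * v).eval t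
      = R.eval T - R.eval 0 := by
    refine intervalIntegral.integral_eq_sub_of_hasDerivAt (f := fun t => R.eval t)
        (f' := fun t => (Polynomial.derivative^[m] u * v).eval t) (fun t _ => ?_) ?_
    · have := R.hasDerivAt t
      rwa [hder] at this
    · exact ((Polynomial.derivative^[m] u * v).continuous.intervalIntegrable _ _)
  have : ∀ t : ℝ, (Polynomial.derivative^[m] u * v).eval t
      = (Polynomial.derivative^[m] u).eval t * (T - t) ^ k := by
    intro t; simp [hv]
  simp_rw [← this]
  rw [hint, hR0, hRT, sub_zero]

lemma comp_iter (T : ℝ) (p : Polynomial ℝ) (k : ℕ) :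
    Polynomial.derivative^[k] (p.comp (C T - X)) =
      (-1:Polynomial ℝ)^k * (Polynomial.derivative^[k] p).comp (C T - X) := by
  induction k generalizing p with
  | zero => simp
  | succ k ih =>
    rw [Function.iterate_succ_apply, derivative_comp]
    have h1 : Polynomial.derivative (C T - X) = -1 := by simp
    rw [h1, neg_one_mul, iterate_derivative_neg, ih (Polynomial.derivative p),
      ← Function.iterate_succ_apply]
    ring

lemma P_eval_zero (T : ℝ) (m : ℕ) :
    (Polynomial.derivative^[m] ((X * (C T - X))^m : Polynomial ℝ)).eval 0
      = (m.factorial : ℝ) * T^m := by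
  rw [← coeff_zero_eq_eval_zero, coeff_iterate_derivative]
  rw [zero_add, Nat.descFactorial_self, mul_pow]
  have hc : ((X:Polynomial ℝ)^m * (C T - X)^m).coeff m
      = ((C T - X)^m : Polynomial ℝ).coeff 0 := by
    simpa using coeff_X_pow_mul ((C T - X)^m : Polynomial ℝ) m 0
  rw [hc, coeff_zero_eq_eval_zero]
  simp [nsmul_eq_mul]

lemma P_comp (T : ℝ) (m : ℕ) :
    (((X * (C T - X))^m : Polynomial ℝ)).comp (C T - X) = (X * (C T - X))^m := by
  rw [pow_comp, mul_comp, sub_comp, X_comp, C_comp]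
  ring

lemma P_eval_T (T : ℝ) (m : ℕ) :
    (Polynomial.derivative^[m] ((X * (C T - X))^m : Polynomial ℝ)).eval T
      = (-1)^m * ((m.factorial : ℝ) * T^m) := by
  conv_lhs => rw [← P_comp T m, comp_iter]
  rw [eval_mul, eval_pow, eval_comp]
  simp only [eval_sub, eval_C, eval_X, eval_neg, eval_one, sub_self]
  rw [P_eval_zero]

set_option maxHeartbeats 1000000 in
/-- Construction of Section 5: a polynomial `α₁` of degree at most `n+1` with
`α₁(0)=1`, `α₁(T)=0` and vanishing moments `∫₀ᵀ α₁(t)(T-t)^k dt = 0` for `k < n`;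
consequently `∫₀ᵀ α₁(t) e^{(T-t)A} B dt = 0` whenever `Aⁿ = 0`. -/
theorem stmt_10 (n : ℕ) (hn : 1 ≤ n) (T : ℝ) (hT : 0 < T) :
    ∃ α₁ : Polynomial ℝ, α₁.natDegree ≤ n + 1 ∧ α₁.eval 0 = 1 ∧ α₁.eval T = 0 ∧
      (∀ k : ℕ, k < n → ∫ t in (0:ℝ)..T, α₁.eval t * (T - t) ^ k = 0) ∧
      (∀ (d₁ d₂ : ℕ) (A : Matrix (Fin d₁) (Fin d₁) ℝ) (B : Matrix (Fin d₁) (Fin d₂) ℝ),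
        A ^ n = 0 →
        ∀ i j, (∫ t in (0:ℝ)..T,
          α₁.eval t * ((NormedSpace.exp ((T - t) • A) * B) i j)) = 0) := by
  have hdvd0 : ∀ m : ℕ, (X:Polynomial ℝ)^m ∣ (X * (C T - X))^m := by
    intro m; rw [mul_pow]; exact dvd_mul_right _ _
  have hdvdT : ∀ m : ℕ, ((X:Polynomial ℝ) - C T)^m ∣ (X * (C T - X))^m := by
    intro m
    have h1 : ((X:Polynomial ℝ) - C T)^m ∣ (C T - X)^m := by
      rw [show ((C T - X : Polynomial ℝ)) = -(X - C T) by ring, neg_pow]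
      exact Dvd.intro_left _ rfl
    rw [mul_pow]
    exact h1.trans (dvd_mul_left _ _)
  set Pn : Polynomial ℝ := Polynomial.derivative^[n] ((X * (C T - X))^n) with hPn
  set Pm : Polynomial ℝ := Polynomial.derivative^[n+1] ((X * (C T - X))^(n+1)) with hPm
  set a : ℝ := (2 * n.factorial * T^n)⁻¹ with ha
  set b : ℝ := (2 * (n+1).factorial * T^(n+1))⁻¹ with hb
  set α : Polynomial ℝ := C a * Pn + C b * Pm with hα
  have hTn : (T:ℝ)^n ≠ 0 := pow_ne_zero _ hT.ne'
  have hTn1 : (T:ℝ)^(n+1) ≠ 0 := pow_ne_zero _ hT.ne'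
  have hfn : (n.factorial : ℝ) ≠ 0 := Nat.cast_ne_zero.mpr n.factorial_ne_zero
  have hfn1 : ((n+1).factorial : ℝ) ≠ 0 := Nat.cast_ne_zero.mpr (n+1).factorial_ne_zero
  -- degree bounds
  have hdegP : ∀ m : ℕ, (Polynomial.derivative^[m] ((X * (C T - X))^m : Polynomial ℝ)).natDegree ≤ m := by
    intro m
    have h1 : ((X * (C T - X))^m : Polynomial ℝ).natDegree ≤ 2 * m := by
      calc ((X * (C T - X))^m : Polynomial ℝ).natDegree ≤ m * (X * (C T - X) : Polynomial ℝ).natDegree :=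
        natDegree_pow_le
      _ ≤ m * 2 := by
          gcongr
          calc (X * (C T - X) : Polynomial ℝ).natDegree ≤ (X:Polynomial ℝ).natDegree + (C T - X : Polynomial ℝ).natDegree := natDegree_mul_le
          _ ≤ 1 + 1 := by
              gcongr
              · exact natDegree_X_le
              · exact (natDegree_sub_le _ _).trans (by simp)
      _ = 2 * m := by ring
    calc (Polynomial.derivative^[m] ((X * (C T - X))^m : Polynomial ℝ)).natDegree
        ≤ ((X * (C T - X))^m : Polynomial ℝ).natDegree - m := natDegree_iterate_derivative _ _
      _ ≤ m := by omega
  -- moments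
  have hmom : ∀ k : ℕ, k < n → ∫ t in (0:ℝ)..T, α.eval t * (T - t) ^ k = 0 := by
    intro k hk
    have h1 := moment_zero T n k hk _ (hdvd0 n) (hdvdT n)
    have h2 := moment_zero T (n+1) k (hk.trans (Nat.lt_succ_self n)) _ (hdvd0 (n+1)) (hdvdT (n+1))
    have heq : ∀ t : ℝ, α.eval t * (T - t)^k
        = a * (Pn.eval t * (T - t)^k) + b * (Pm.eval t * (T - t)^k) := by
      intro t; simp [hα]; ring
    have c1 : Continuous fun t : ℝ => Pn.eval t * (T - t)^k :=
      Pn.continuous.mul ((continuous_const.sub continuous_id).pow k)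
    have c2 : Continuous fun t : ℝ => Pm.eval t * (T - t)^k :=
      Pm.continuous.mul ((continuous_const.sub continuous_id).pow k)
    rw [intervalIntegral.integral_congr (g := fun t =>
      a * (Pn.eval t * (T - t)^k) + b * (Pm.eval t * (T - t)^k)) (fun t _ => heq t)]
    rw [intervalIntegral.integral_add
      (f := fun t => a * (Pn.eval t * (T - t)^k)) (g := fun t => b * (Pm.eval t * (T - t)^k))
      ((continuous_const.mul c1).intervalIntegrable _ _) ((continuous_const.mul c2).intervalIntegrable _ _),
      intervalIntegral.integral_const_mul, intervalIntegral.integral_const_mul,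
      h1, h2, mul_zero, mul_zero, add_zero]
  refine ⟨α, ?_, ?_, ?_, hmom, ?_⟩
  · -- degree
    calc α.natDegree ≤ max (C a * Pn).natDegree (C b * Pm).natDegree := natDegree_add_le _ _
      _ ≤ n + 1 := by
        apply max_le
        · exact (natDegree_C_mul_le _ _).trans ((hdegP n).trans (Nat.le_succ n))
        · exact (natDegree_C_mul_le _ _).trans (hdegP (n+1))
  · -- eval 0
    have e1 := P_eval_zero T n
    have e2 := P_eval_zero T (n+1)
    rw [hα, eval_add, eval_mul, eval_mul, eval_C, eval_C, ← hPn, ← hPm] at *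
    rw [e1, e2, ha, hb]
    field_simp
    ring
  · -- eval T
    have e1 := P_eval_T T n
    have e2 := P_eval_T T (n+1)
    rw [hα, eval_add, eval_mul, eval_mul, eval_C, eval_C, ← hPn, ← hPm] at *
    rw [e1, e2, ha, hb, pow_succ (-1:ℝ) n]
    field_simp
    ring
  · -- matrix part
    intro d₁ d₂ A B hA i j
    have hAk : ∀ k, n ≤ k → A ^ k = 0 := by
      intro k hk
      rw [show k = n + (k - n) by omega, pow_add, hA, zero_mul]
    have hexp : ∀ t : ℝ, (NormedSpace.exp ((T-t) • A) * B) i j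
        = ∑ k ∈ Finset.range n, ((A^k * B) i j * (k.factorial : ℝ)⁻¹) * (T-t)^k := by
      intro t
      have hts : (∑' k : ℕ, ((k.factorial : ℝ))⁻¹ • ((T-t) • A)^k)
          = ∑ k ∈ Finset.range n, ((k.factorial : ℝ))⁻¹ • ((T-t) • A)^k :=
        tsum_eq_sum (fun k hk => by
          have hz : A ^ k = 0 := hAk k (Nat.le_of_not_lt (by simpa using hk))
          rw [_root_.smul_pow, hz, smul_zero, smul_zero])
      simp only [NormedSpace.exp_eq_tsum (𝕂 := ℝ)]
      rw [hts, Matrix.sum_mul, Matrix.sum_apply]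
      refine Finset.sum_congr rfl fun k hk => ?_
      rw [_root_.smul_pow, smul_smul, Matrix.smul_mul, Matrix.smul_apply, smul_eq_mul]
      ring
    rw [intervalIntegral.integral_congr (g := fun t => ∑ k ∈ Finset.range n,
        ((A^k * B) i j * (k.factorial : ℝ)⁻¹) * (α.eval t * (T-t)^k))
      (fun t _ => by
        rw [hexp t, Finset.mul_sum]
        exact Finset.sum_congr rfl fun k _ => by ring)]
    have hint : ∀ k ∈ Finset.range n, IntervalIntegrable
        (fun t => ((A^k * B) i j * (k.factorial : ℝ)⁻¹) * (α.eval t * (T-t)^k))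
        MeasureTheory.volume (0:ℝ) T := by
      intro k _
      exact ((continuous_const.mul (α.continuous.mul
        ((continuous_const.sub continuous_id).pow k))).intervalIntegrable _ _)
    rw [intervalIntegral.integral_finset_sum hint]
    refine Finset.sum_eq_zero fun k hk => ?_
    rw [intervalIntegral.integral_const_mul, hmom k (Finset.mem_range.mp hk), mul_zero]
end

section
/- Let $(E,\mathcal{E})$ be a measurable space, $\mu$ a probability measure on $E$, $\kappa$ a Markov kernel from $E$ to $E$, and write $Pf(z)=\int_E f\,d\kappa(z,\cdot)$. Let $p>1$, let $\Phi:E\times E\to[0,\infty)$ be measurable, and assume: (i) for every bounded measurable $f\geq0$ and all $z,\hat z\in E$, $(Pf(z))^p\leq e^{\Phi(z,\hat z)}\,Pf^p(\hat z)$; (ii) there exists $\tilde K>0$ such that $\int_E Pf\,d\mu\leq\tilde K\int_E f\,d\mu$ for every bounded measurable $f\geq0$. Then for every $v>1$ and every bounded measurable $f\geq0$ with $\int_E f^p\,d\mu=1$, $\int_E\big(Pf(z)\big)^{vp}\,\mu(dz)\;\leq\;\tilde K^{v}\int_E\frac{\mu(dz)}{\big(\int_E e^{-\Phi(z,\hat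 z)}\,\mu(d\hat z)\big)^{v}}.$ -/
open MeasureTheory ProbabilityTheory ENNReal

/-- Abstract hyperboundedness argument of Theorem 5.2(3): a Harnack inequality with power
`p > 1` for a Markov operator `P f (z) = ∫ f dκ(z,·)`, together with an excessive
probability measure `μ` (`μ(Pf) ≤ K̃ μ(f)`), yields the `L^p → L^{vp}` bound. -/
theorem stmt_11 {E : Type*} [MeasurableSpace E]
    (μ : Measure E) [IsProbabilityMeasure μ]
    (κ : Kernel E E) [IsMarkovKernel κ]
    (p : ℝ) (hp : 1 < p)
    (Φ : E → E → ℝ) (hΦmeas : Measurable (Function.uncurry Φ))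
    (hΦnonneg : ∀ z zh, 0 ≤ Φ z zh)
    (harnack : ∀ f : E → ℝ, Measurable f → (∀ x, 0 ≤ f x) → (∃ c, ∀ x, f x ≤ c) →
      ∀ z zh : E, (∫ x, f x ∂(κ z)) ^ p ≤ Real.exp (Φ z zh) * ∫ x, f x ^ p ∂(κ zh))
    (K : ℝ) (hK : 0 < K)
    (excessive : ∀ f : E → ℝ, Measurable f → (∀ x, 0 ≤ f x) → (∃ c, ∀ x, f x ≤ c) →
      ∫ z, (∫ x, f x ∂(κ z)) ∂μ ≤ K * ∫ x, f x ∂μ) :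
    ∀ v : ℝ, 1 < v →
      ∀ f : E → ℝ, Measurable f → (∀ x, 0 ≤ f x) → (∃ c, ∀ x, f x ≤ c) →
      (∫ x, f x ^ p ∂μ) = 1 →
      ∫⁻ z, ENNReal.ofReal ((∫ x, f x ∂(κ z)) ^ (v * p)) ∂μ ≤
        ENNReal.ofReal (K ^ v) *
          ∫⁻ z, (∫⁻ zh, ENNReal.ofReal (Real.exp (-Φ z zh)) ∂μ) ^ (-v) ∂μ := by
  intro v hv f hf hf0 hfb hfp1
  obtain ⟨c, hc⟩ := hfb
  set c' : ℝ := max c 0 with hc'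
  have hc'0 : 0 ≤ c' := le_max_right _ _
  have hfc' : ∀ x, f x ≤ c' := fun x => (hc x).trans (le_max_left _ _)
  have hp0 : (0:ℝ) ≤ p := le_of_lt (lt_trans one_pos hp)
  have hv0 : (0:ℝ) < v := lt_trans one_pos hv
  -- properties of f^p
  have hfpmeas : Measurable fun x => f x ^ p := by measurability
  have hfp0 : ∀ x, 0 ≤ f x ^ p := fun x => Real.rpow_nonneg (hf0 x) p
  have hfpb : ∀ x, f x ^ p ≤ c' ^ p := fun x =>
    Real.rpow_le_rpow (hf0 x) (hfc' x) hp0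
  -- g z := ∫ f dκ z
  set g : E → ℝ := fun z => ∫ x, f x ∂(κ z) with hg
  have hg0 : ∀ z, 0 ≤ g z := fun z => integral_nonneg hf0
  -- A z := ∫ exp(-Φ z ·) dμ
  set A : E → ℝ := fun z => ∫ zh, Real.exp (-Φ z zh) ∂μ with hA
  have hΦz : ∀ z, Measurable fun zh => Φ z zh := fun z =>
    hΦmeas.comp measurable_prodMk_left
  have hexpmeas : ∀ z, Measurable fun zh => Real.exp (-Φ z zh) := fun z =>
    (Real.measurable_exp.comp (hΦz z).neg)
  have hexple : ∀ z zh, Real.exp (-Φ z zh) ≤ 1 := fun z zh => by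
    rw [Real.exp_le_one_iff]; linarith [hΦnonneg z zh]
  have hexpint : ∀ z, Integrable (fun zh => Real.exp (-Φ z zh)) μ := fun z => by
    refine (integrable_const (1:ℝ)).mono' (hexpmeas z).aestronglyMeasurable ?_
    filter_upwards with zh
    rw [Real.norm_eq_abs, abs_of_pos (Real.exp_pos _)]
    exact hexple z zh
  have hA0 : ∀ z, 0 ≤ A z := fun z =>
    integral_nonneg fun zh => (Real.exp_pos _).le
  -- lintegral of exp(-Φ) equals ofReal A
  have hAeq : ∀ z, (∫⁻ zh, ENNReal.ofReal (Real.exp (-Φ z zh)) ∂μ) = ENNReal.ofReal (A z) :=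
    fun z => (ofReal_integral_eq_lintegral_ofReal (hexpint z)
      (Filter.Eventually.of_forall fun zh => (Real.exp_pos _).le)).symm
  -- F z := ∫ f^p dκ z is measurable, bounded, integrable
  have hFmeas : StronglyMeasurable fun z => ∫ x, f x ^ p ∂(κ z) := by
    exact StronglyMeasurable.integral_kernel_prod_right'
      (f := fun q : E × E => f q.2 ^ p)
      ((hfpmeas.comp measurable_snd).stronglyMeasurable)
  have hFint : Integrable (fun z => ∫ x, f x ^ p ∂(κ z)) μ := by
    refine (integrable_const (c' ^ p)).mono' hFmeas.aestronglyMeasurable ?_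
    filter_upwards with z
    rw [Real.norm_eq_abs, abs_of_nonneg (integral_nonneg hfp0)]
    calc ∫ x, f x ^ p ∂(κ z) ≤ ∫ _x, c' ^ p ∂(κ z) := by
          refine integral_mono ?_ (integrable_const _) hfpb
          refine (integrable_const (c' ^ p)).mono' hfpmeas.aestronglyMeasurable ?_
          filter_upwards with x
          rw [Real.norm_eq_abs, abs_of_nonneg (hfp0 x)]; exact hfpb x
      _ = c' ^ p := by simp
  -- key real bound: A z * g z ^ p ≤ K
  have hkey : ∀ z, A z * g z ^ p ≤ K := by
    intro z
    have h1 : ∀ zh, Real.exp (-Φ z zh) * g z ^ p ≤ ∫ x, f x ^ p ∂(κ zh) := by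
      intro zh
      have := harnack f hf hf0 ⟨c, hc⟩ z zh
      have h2 : Real.exp (-Φ z zh) * (g z ^ p) ≤
          Real.exp (-Φ z zh) * (Real.exp (Φ z zh) * ∫ x, f x ^ p ∂(κ zh)) :=
        mul_le_mul_of_nonneg_left this (Real.exp_pos _).le
      calc Real.exp (-Φ z zh) * g z ^ p ≤
            Real.exp (-Φ z zh) * (Real.exp (Φ z zh) * ∫ x, f x ^ p ∂(κ zh)) := h2
        _ = ∫ x, f x ^ p ∂(κ zh) := by
            rw [← mul_assoc, ← Real.exp_add]; simp
    have h3 : A z * g z ^ p ≤ ∫ zh, (∫ x, f x ^ p ∂(κ zh)) ∂μ := by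
      rw [hA, ← integral_mul_const]
      exact integral_mono ((hexpint z).mul_const _) hFint h1
    have h4 := excessive (fun x => f x ^ p) hfpmeas hfp0 ⟨c' ^ p, hfpb⟩
    rw [hfp1, mul_one] at h4
    linarith
  -- pointwise ENNReal bound
  have hpt : ∀ z, ENNReal.ofReal (g z ^ (v * p)) ≤
      ENNReal.ofReal (K ^ v) *
        (∫⁻ zh, ENNReal.ofReal (Real.exp (-Φ z zh)) ∂μ) ^ (-v) := by
    intro z
    rw [hAeq z]
    rcases eq_or_lt_of_le (hA0 z) with hAz | hAz
    · -- A z = 0 : RHS is ⊤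
      rw [← hAz]
      rw [ENNReal.ofReal_zero, ENNReal.zero_rpow_of_neg (by linarith)]
      rw [ENNReal.mul_top (by positivity)]
      exact le_top
    · -- A z > 0
      have hgp0 : 0 ≤ g z ^ p := Real.rpow_nonneg (hg0 z) p
      have h5 : (A z * g z ^ p) ^ v ≤ K ^ v :=
        Real.rpow_le_rpow (by positivity) (hkey z) hv0.le
      rw [Real.mul_rpow hAz.le hgp0, ← Real.rpow_mul (hg0 z)] at h5
      have h6 : g z ^ (v * p) ≤ K ^ v / A z ^ v := by
        rw [le_div_iff₀ (Real.rpow_pos_of_pos hAz v), mul_comm p v] at *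
        linarith
      calc ENNReal.ofReal (g z ^ (v * p)) ≤ ENNReal.ofReal (K ^ v / A z ^ v) :=
            ENNReal.ofReal_le_ofReal h6
        _ = ENNReal.ofReal (K ^ v) / ENNReal.ofReal (A z ^ v) :=
            ENNReal.ofReal_div_of_pos (Real.rpow_pos_of_pos hAz v)
        _ = ENNReal.ofReal (K ^ v) * (ENNReal.ofReal (A z)) ^ (-v) := by
            rw [ENNReal.rpow_neg, ← ENNReal.ofReal_rpow_of_pos hAz, div_eq_mul_inv]
  -- integrate
  calc ∫⁻ z, ENNReal.ofReal (g z ^ (v * p)) ∂μ ≤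
        ∫⁻ z, ENNReal.ofReal (K ^ v) *
          (∫⁻ zh, ENNReal.ofReal (Real.exp (-Φ z zh)) ∂μ) ^ (-v) ∂μ :=
        lintegral_mono hpt
    _ = ENNReal.ofReal (K ^ v) *
        ∫⁻ z, (∫⁻ zh, ENNReal.ofReal (Real.exp (-Φ z zh)) ∂μ) ^ (-v) ∂μ :=
        lintegral_const_mul' _ _ ENNReal.ofReal_ne_top
end
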